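/- (Exponential stability implies E-δISS.) Suppose f satisfies the local behavior assumptions and the system x_{k+1} = f(k, x_k) is uniformly exponentially stable in D (there exist d > 0 and λ ∈ (0,1) such that every solution with x_{k₀} = ξ ∈ D satisfies ‖x_k‖ ≤ d‖ξ‖λ^{k−k₀} for all k ≥ k₀). Then the system is E-δISS in D: there exist constants c₀, c_w > 0 and ρ ∈ (0,1) such that for every initial time k₀, every unperturbed solution x (x_{k+1} = f(k, x_k)) and every perturbed sequence y (y_{k+1} = f(k, y_k) + w_k for some disturbance w : ℕ → ℝⁿ), provided x_k ∈ D and y_k ∈ D for all k ≥ k₀, one has ‖x_k − y_k‖ ≤ c₀ ρ^{k−k₀} ‖x_{k₀} − y_{k₀}‖ + c_w Σ_{i=k₀}^{k−1} ρ^{k−1−i} ‖w_i‖ for all k ≥ k₀. -/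

import Mathlib

namespace EDISS

variable {E : Type*} [NormedAddCommGroup E] [NormedSpace ℝ E]

/-- The (unperturbed) flow: `flow f k₀ m ξ` is the state after `m` steps starting
from state `ξ` at time `k₀`. -/
def flow (f : ℕ → E → E) (k₀ : ℕ) : ℕ → E → E
  | 0, ξ => ξ
  | m+1, ξ => f (k₀ + m) (flow f k₀ m ξ)

/-- Product of linearizations. -/
def tmat (A : ℕ → E →L[ℝ] E) (k₀ : ℕ) : ℕ → (E →L[ℝ] E)
  | 0 => ContinuousLinearMap.id ℝ E
  | m+1 => (A (k₀ + m)).comp (tmat A k₀ m)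

lemma flow_add (f : ℕ → E → E) (k₀ a : ℕ) :
    ∀ (b : ℕ) (ξ : E), flow f k₀ (a + b) ξ = flow f (k₀ + a) b (flow f k₀ a ξ)
  | 0, ξ => rfl
  | b+1, ξ => by
    show flow f k₀ (a+b+1) ξ = f (k₀ + a + b) (flow f (k₀+a) b (flow f k₀ a ξ))
    rw [← flow_add f k₀ a b ξ]
    show f (k₀ + (a+b)) (flow f k₀ (a+b) ξ) = _
    rw [add_assoc]

lemma telescope {M : Type*} [AddCommGroup M] (g : ℕ → M) {m n : ℕ} (h : m ≤ n) :
    ∑ i ∈ Finset.Ico m n, (g (i+1) - g i) = g n - g m := by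
  induction n, h using Nat.le_induction with
  | base => simp
  | succ j hj ih =>
    rw [Finset.sum_Ico_succ_top (by omega), ih]
    abel

/-- Helper recursion for remainder constants. -/
noncomputable def Kc (c a : ℝ) : ℕ → ℝ
  | 0 => 0
  | m+1 => c + a * Kc c a m

structure Setup (E : Type*) [NormedAddCommGroup E] [NormedSpace ℝ E] where
  D : Set E
  f : ℕ → E → E
  J : ℕ → E → E →L[ℝ] E
  Lf : ℝ
  d : ℝ
  lam : ℝ
  r₀ : ℝ
  Abar : ℝ
  LJ : ℝ
  R : ℝ
  h0D : (0:E) ∈ D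
  hinv : ∀ k, ∀ x ∈ D, f k x ∈ D
  hf0 : ∀ k, f k 0 = 0
  hLf : 0 < Lf
  hLip : ∀ k, ∀ p ∈ D, ∀ q ∈ D, ‖f k p - f k q‖ ≤ Lf * ‖p - q‖
  hr₀ : 0 < r₀
  hball : Metric.ball (0:E) r₀ ⊆ D
  hJ : ∀ k, ∀ x ∈ Metric.ball (0:E) r₀, HasFDerivAt (f k) (J k x) x
  hAbar : 0 < Abar
  hJbound : ∀ k, ∀ x ∈ Metric.ball (0:E) r₀, ‖J k x‖ ≤ Abar
  hLJ : 0 < LJ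
  hJLip : ∀ k, ∀ x ∈ Metric.ball (0:E) r₀, ∀ y ∈ Metric.ball (0:E) r₀,
    ‖J k x - J k y‖ ≤ LJ * ‖x - y‖
  hd : 0 < d
  hlam0 : 0 < lam
  hlam1 : lam < 1
  hR : ∀ x ∈ D, ‖x‖ ≤ R
  hR0 : 0 < R
  hES : ∀ k₀ ξ, ξ ∈ D → ∀ m, ‖flow f k₀ m ξ‖ ≤ d * ‖ξ‖ * lam ^ m

namespace Setup

variable (S : Setup E)

/-- `d` adjusted to be at least 1. -/
noncomputable def d' : ℝ := max S.d 1

lemma one_le_d' : 1 ≤ S.d' := le_max_right _ _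
lemma d'_pos : 0 < S.d' := lt_of_lt_of_le one_pos S.one_le_d'

/-- Lipschitz constant adjusted to be at least 1. -/
noncomputable def L : ℝ := max S.Lf 1

lemma one_le_L : 1 ≤ S.L := le_max_right _ _
lemma L_pos : 0 < S.L := lt_of_lt_of_le one_pos S.one_le_L

lemma flow_mem (k₀ : ℕ) (m : ℕ) {ξ : E} (h : ξ ∈ S.D) : flow S.f k₀ m ξ ∈ S.D := by
  induction m with
  | zero => exact h
  | succ m ih => exact S.hinv _ _ ih

lemma lam_pow_le_one (m : ℕ) : S.lam ^ m ≤ 1 :=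
  pow_le_one₀ S.hlam0.le S.hlam1.le

lemma norm_flow_le (k₀ m : ℕ) {ξ : E} (h : ξ ∈ S.D) :
    ‖flow S.f k₀ m ξ‖ ≤ S.d' * S.lam ^ m * ‖ξ‖ := by
  have h1 := S.hES k₀ ξ h m
  have hd' : S.d ≤ S.d' := le_max_left _ _
  have h2 : S.d * ‖ξ‖ * S.lam ^ m ≤ S.d' * S.lam ^ m * ‖ξ‖ := by
    have := mul_le_mul_of_nonneg_right hd'
      (mul_nonneg (norm_nonneg ξ) (pow_nonneg S.hlam0.le m))
    calc S.d * ‖ξ‖ * S.lam ^ m = S.d * (‖ξ‖ * S.lam ^ m) := by ring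
      _ ≤ S.d' * (‖ξ‖ * S.lam ^ m) := this
      _ = S.d' * S.lam ^ m * ‖ξ‖ := by ring
  exact h1.trans h2

lemma norm_flow_le' (k₀ m : ℕ) {ξ : E} (h : ξ ∈ S.D) :
    ‖flow S.f k₀ m ξ‖ ≤ S.d' * ‖ξ‖ := by
  refine (S.norm_flow_le k₀ m h).trans ?_
  have h2 : S.d' * S.lam ^ m ≤ S.d' * 1 :=
    mul_le_mul_of_nonneg_left (S.lam_pow_le_one m) S.d'_pos.le
  calc S.d' * S.lam ^ m * ‖ξ‖ ≤ S.d' * 1 * ‖ξ‖ :=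
        mul_le_mul_of_nonneg_right h2 (norm_nonneg _)
    _ = S.d' * ‖ξ‖ := by ring

lemma flow_lipschitz (k₀ : ℕ) (m : ℕ) {a b : E} (ha : a ∈ S.D) (hb : b ∈ S.D) :
    ‖flow S.f k₀ m a - flow S.f k₀ m b‖ ≤ S.L ^ m * ‖a - b‖ := by
  induction m with
  | zero => simp [flow]
  | succ m ih =>
    have h1 := S.hLip (k₀+m) _ (S.flow_mem k₀ m ha) _ (S.flow_mem k₀ m hb)
    have hLfL : S.Lf ≤ S.L := le_max_left _ _
    calc ‖flow S.f k₀ (m+1) a - flow S.f k₀ (m+1) b‖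
        = ‖S.f (k₀+m) (flow S.f k₀ m a) - S.f (k₀+m) (flow S.f k₀ m b)‖ := rfl
      _ ≤ S.Lf * ‖flow S.f k₀ m a - flow S.f k₀ m b‖ := h1
      _ ≤ S.L * ‖flow S.f k₀ m a - flow S.f k₀ m b‖ :=
          mul_le_mul_of_nonneg_right hLfL (norm_nonneg _)
      _ ≤ S.L * (S.L ^ m * ‖a - b‖) := mul_le_mul_of_nonneg_left ih S.L_pos.le
      _ = S.L ^ (m+1) * ‖a - b‖ := by ring

lemma zero_mem_ball : (0:E) ∈ Metric.ball (0:E) S.r₀ := by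
  simpa using S.hr₀

/-- Mean value remainder estimate: on a ball of radius `c < r₀`, `f k` deviates from its
linearization at the origin by at most `LJ * c` relative Lipschitz error. -/
lemma taylor_step (k : ℕ) {a b : E} {c : ℝ} (hc : c < S.r₀)
    (ha : ‖a‖ ≤ c) (hb : ‖b‖ ≤ c) :
    ‖S.f k a - S.f k b - S.J k 0 (a - b)‖ ≤ S.LJ * c * ‖a - b‖ := by
  set g : E → E := fun x => S.f k x - S.J k 0 x with hg
  have hsub : Metric.closedBall (0:E) c ⊆ Metric.ball (0:E) S.r₀ := by
    intro x hx
    simp only [Metric.mem_closedBall, Metric.mem_ball, dist_zero_right] at *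
    exact lt_of_le_of_lt hx hc
  have hderiv : ∀ x ∈ Metric.closedBall (0:E) c,
      HasFDerivWithinAt g (S.J k x - S.J k 0) (Metric.closedBall (0:E) c) x := by
    intro x hx
    exact ((S.hJ k x (hsub hx)).sub ((S.J k 0).hasFDerivAt)).hasFDerivWithinAt
  have hbound : ∀ x ∈ Metric.closedBall (0:E) c, ‖S.J k x - S.J k 0‖ ≤ S.LJ * c := by
    intro x hx
    have h1 := S.hJLip k x (hsub hx) 0 S.zero_mem_ball
    simp only [Metric.mem_closedBall, dist_zero_right] at hx
    have : S.LJ * ‖x - 0‖ ≤ S.LJ * c := by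
      rw [sub_zero]; exact mul_le_mul_of_nonneg_left hx S.hLJ.le
    exact h1.trans this
  have hconv : Convex ℝ (Metric.closedBall (0:E) c) := convex_closedBall _ _
  have hma : a ∈ Metric.closedBall (0:E) c := by
    simpa [Metric.mem_closedBall, dist_zero_right] using ha
  have hmb : b ∈ Metric.closedBall (0:E) c := by
    simpa [Metric.mem_closedBall, dist_zero_right] using hb
  have := hconv.norm_image_sub_le_of_norm_hasFDerivWithin_le hderiv hbound hmb hma
  have hrw : g a - g b = S.f k a - S.f k b - S.J k 0 (a - b) := by
    simp only [hg, map_sub]; abel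
  rwa [hrw] at this

/-- The linearization along the zero trajectory. -/
noncomputable def A : ℕ → E →L[ℝ] E := fun k => S.J k 0

/-- Remainder constants for the flow Taylor expansion. -/
noncomputable def K (m : ℕ) : ℝ := Kc (S.LJ * S.d' ^ 2) S.Abar m

lemma K_zero : S.K 0 = 0 := rfl
lemma K_succ (m : ℕ) : S.K (m+1) = S.LJ * S.d' ^ 2 + S.Abar * S.K m := rfl

lemma K_nonneg (m : ℕ) : 0 ≤ S.K m := by
  induction m with
  | zero => exact le_of_eq S.K_zero.symm
  | succ m ih =>
    rw [S.K_succ]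
    have h1 : (0:ℝ) ≤ S.LJ * S.d' ^ 2 := mul_nonneg S.hLJ.le (sq_nonneg _)
    have h2 : (0:ℝ) ≤ S.Abar * S.K m := mul_nonneg S.hAbar.le ih
    linarith

lemma norm_tmat_apply_le (k₀ m : ℕ) (ξ : E) : ‖tmat S.A k₀ m ξ‖ ≤ S.Abar ^ m * ‖ξ‖ := by
  induction m with
  | zero => simp [tmat]
  | succ m ih =>
    calc ‖tmat S.A k₀ (m+1) ξ‖ = ‖S.A (k₀+m) (tmat S.A k₀ m ξ)‖ := rfl
      _ ≤ ‖S.J (k₀+m) 0‖ * ‖tmat S.A k₀ m ξ‖ := (S.J (k₀+m) 0).le_opNorm _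
      _ ≤ S.Abar * (S.Abar ^ m * ‖ξ‖) := by
          refine mul_le_mul (S.hJbound (k₀+m) 0 S.zero_mem_ball) ih (norm_nonneg _) S.hAbar.le
      _ = S.Abar ^ (m+1) * ‖ξ‖ := by ring

/-- Taylor expansion of the flow around the origin. -/
lemma taylor_flow (k₀ : ℕ) (m : ℕ) {η : E} (hη : ‖η‖ < S.r₀ / S.d') :
    ‖flow S.f k₀ m η - tmat S.A k₀ m η‖ ≤ S.K m * ‖η‖ ^ 2 := by
  have hηr₀ : ‖η‖ < S.r₀ := lt_of_lt_of_le hη (by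
    rw [div_le_iff₀ S.d'_pos]
    nlinarith [S.hr₀, S.one_le_d'])
  have hηD : η ∈ S.D := S.hball (by simpa [Metric.mem_ball, dist_zero_right] using hηr₀)
  have hd'η : S.d' * ‖η‖ < S.r₀ := by
    rw [div_eq_mul_inv] at hη
    calc S.d' * ‖η‖ < S.d' * (S.r₀ * S.d'⁻¹) := by
          exact mul_lt_mul_of_pos_left hη S.d'_pos
      _ = S.r₀ := by
          rw [mul_comm S.r₀ _, ← mul_assoc, mul_inv_cancel₀ (ne_of_gt S.d'_pos), one_mul]
  induction m with
  | zero =>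
    simp only [flow, tmat, ContinuousLinearMap.id_apply, sub_self, norm_zero]
    exact mul_nonneg (S.K_nonneg 0) (sq_nonneg _)
  | succ m ih =>
    have hz : ‖flow S.f k₀ m η‖ ≤ S.d' * ‖η‖ := S.norm_flow_le' k₀ m hηD
    set z := flow S.f k₀ m η with hzdef
    have step : ‖S.f (k₀+m) z - S.J (k₀+m) 0 z‖ ≤ S.LJ * (S.d' * ‖η‖) * ‖z‖ := by
      have := S.taylor_step (k₀+m) (a := z) (b := 0) (c := S.d' * ‖η‖) hd'η hz (by simpa using mul_nonneg S.d'_pos.le (norm_nonneg η))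
      simpa [S.hf0, sub_zero] using this
    calc ‖flow S.f k₀ (m+1) η - tmat S.A k₀ (m+1) η‖
        = ‖(S.f (k₀+m) z - S.J (k₀+m) 0 z) + S.J (k₀+m) 0 (z - tmat S.A k₀ m η)‖ := by
          show ‖S.f (k₀+m) z - S.J (k₀+m) 0 (tmat S.A k₀ m η)‖ = _
          rw [map_sub]; congr 1; abel
      _ ≤ ‖S.f (k₀+m) z - S.J (k₀+m) 0 z‖ + ‖S.J (k₀+m) 0 (z - tmat S.A k₀ m η)‖ :=
          norm_add_le _ _
      _ ≤ S.LJ * (S.d' * ‖η‖) * ‖z‖ + S.Abar * ‖z - tmat S.A k₀ m η‖ := by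
          refine add_le_add step ?_
          calc ‖S.J (k₀+m) 0 (z - tmat S.A k₀ m η)‖
              ≤ ‖S.J (k₀+m) 0‖ * ‖z - tmat S.A k₀ m η‖ := (S.J (k₀+m) 0).le_opNorm _
            _ ≤ S.Abar * ‖z - tmat S.A k₀ m η‖ :=
                mul_le_mul_of_nonneg_right (S.hJbound _ 0 S.zero_mem_ball) (norm_nonneg _)
      _ ≤ S.LJ * (S.d' * ‖η‖) * (S.d' * ‖η‖) + S.Abar * (S.K m * ‖η‖ ^ 2) := by
          refine add_le_add ?_ (mul_le_mul_of_nonneg_left ih S.hAbar.le)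
          exact mul_le_mul_of_nonneg_left hz
            (mul_nonneg S.hLJ.le (mul_nonneg S.d'_pos.le (norm_nonneg _)))
      _ = (S.LJ * S.d' ^ 2 + S.Abar * S.K m) * ‖η‖ ^ 2 := by ring
      _ = S.K (m+1) * ‖η‖ ^ 2 := rfl

/-- The linearized transition operators inherit the exponential stability estimate. -/
lemma norm_tmat_le (k₀ m : ℕ) (ξ : E) :
    ‖tmat S.A k₀ m ξ‖ ≤ S.d' * S.lam ^ m * ‖ξ‖ := by
  rcases eq_or_ne ξ 0 with rfl | hξ
  · simp
  have hξ0 : 0 < ‖ξ‖ := norm_pos_iff.2 hξ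
  have main : ∀ ε : ℝ, 0 < ε → ‖tmat S.A k₀ m ξ‖ ≤ S.d' * S.lam ^ m * ‖ξ‖ + ε := by
    intro ε hε
    set t : ℝ := min (S.r₀ / (2 * S.d' * ‖ξ‖)) (ε / ((S.K m + 1) * ‖ξ‖ ^ 2)) with ht
    have hKm1 : 0 < S.K m + 1 := by linarith [S.K_nonneg m]
    have ht1 : 0 < S.r₀ / (2 * S.d' * ‖ξ‖) := by
      apply div_pos S.hr₀
      have := S.d'_pos
      positivity
    have ht2 : 0 < ε / ((S.K m + 1) * ‖ξ‖ ^ 2) := by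
      apply div_pos hε
      positivity
    have htpos : 0 < t := lt_min ht1 ht2
    set η : E := t • ξ with hη
    have hnη : ‖η‖ = t * ‖ξ‖ := by
      rw [hη, norm_smul, Real.norm_eq_abs, abs_of_pos htpos]
    have hηsmall : ‖η‖ < S.r₀ / S.d' := by
      rw [hnη]
      have h1 : t ≤ S.r₀ / (2 * S.d' * ‖ξ‖) := min_le_left _ _
      have h2 : t * ‖ξ‖ ≤ S.r₀ / (2 * S.d') := by
        have heq : S.r₀ / (2 * S.d' * ‖ξ‖) * ‖ξ‖ = S.r₀ / (2 * S.d') := by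
          rw [div_mul_eq_mul_div, mul_assoc, mul_comm S.d' ‖ξ‖, ← mul_assoc,
            mul_comm (2:ℝ) ‖ξ‖, mul_assoc, mul_comm S.r₀ ‖ξ‖, mul_div_mul_left _ _ (ne_of_gt hξ0)]
        calc t * ‖ξ‖ ≤ S.r₀ / (2 * S.d' * ‖ξ‖) * ‖ξ‖ :=
              mul_le_mul_of_nonneg_right h1 hξ0.le
          _ = S.r₀ / (2 * S.d') := heq
      refine lt_of_le_of_lt h2 ?_
      rw [div_lt_div_iff₀ (by have := S.d'_pos; positivity) S.d'_pos]
      nlinarith [S.hr₀, S.d'_pos]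
    have hηD : η ∈ S.D := by
      apply S.hball
      simp only [Metric.mem_ball, dist_zero_right]
      refine lt_of_lt_of_le hηsmall ?_
      rw [div_le_iff₀ S.d'_pos]
      nlinarith [S.hr₀, S.one_le_d']
    have htf := S.taylor_flow k₀ m hηsmall
    have hfl := S.norm_flow_le k₀ m hηD
    have hlin : tmat S.A k₀ m η = t • tmat S.A k₀ m ξ := by
      rw [hη, map_smul]
    have key : t * ‖tmat S.A k₀ m ξ‖ ≤ t * (S.d' * S.lam ^ m * ‖ξ‖ + ε) := by
      have e1 : ‖tmat S.A k₀ m η‖ = t * ‖tmat S.A k₀ m ξ‖ := by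
        rw [hlin, norm_smul, Real.norm_eq_abs, abs_of_pos htpos]
      have e2 : ‖tmat S.A k₀ m η‖ ≤ ‖flow S.f k₀ m η‖ + S.K m * ‖η‖ ^ 2 := by
        have := norm_sub_norm_le (flow S.f k₀ m η) (tmat S.A k₀ m η)
        have h3 : ‖tmat S.A k₀ m η‖ - ‖flow S.f k₀ m η‖ ≤ S.K m * ‖η‖ ^ 2 := by
          calc ‖tmat S.A k₀ m η‖ - ‖flow S.f k₀ m η‖ ≤ ‖tmat S.A k₀ m η - flow S.f k₀ m η‖ :=
                norm_sub_norm_le _ _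
            _ = ‖flow S.f k₀ m η - tmat S.A k₀ m η‖ := by rw [norm_sub_rev]
            _ ≤ S.K m * ‖η‖ ^ 2 := htf
        linarith
      have e3 : S.K m * ‖η‖ ^ 2 ≤ t * ε := by
        have h4 : t ≤ ε / ((S.K m + 1) * ‖ξ‖ ^ 2) := min_le_right _ _
        have h5 : t * ((S.K m + 1) * ‖ξ‖ ^ 2) ≤ ε := by
          rw [← le_div_iff₀ (by positivity)]
          exact h4
        have h6 : S.K m * ‖η‖ ^ 2 = t * (S.K m * (t * ‖ξ‖ ^ 2)) := by
          rw [hnη]; ring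
        rw [h6]
        refine mul_le_mul_of_nonneg_left ?_ htpos.le
        calc S.K m * (t * ‖ξ‖ ^ 2) ≤ (S.K m + 1) * (t * ‖ξ‖ ^ 2) := by
              nlinarith [S.K_nonneg m, htpos, sq_nonneg ‖ξ‖, mul_pos htpos (mul_pos (mul_pos hξ0 hξ0) htpos)]
          _ = t * ((S.K m + 1) * ‖ξ‖ ^ 2) := by ring
          _ ≤ ε := h5
      calc t * ‖tmat S.A k₀ m ξ‖ = ‖tmat S.A k₀ m η‖ := e1.symm
        _ ≤ ‖flow S.f k₀ m η‖ + S.K m * ‖η‖ ^ 2 := e2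
        _ ≤ S.d' * S.lam ^ m * ‖η‖ + t * ε := add_le_add hfl e3
        _ = t * (S.d' * S.lam ^ m * ‖ξ‖ + ε) := by rw [hnη]; ring
    exact le_of_mul_le_mul_left key htpos
  by_contra hcon
  push_neg at hcon
  have := main ((‖tmat S.A k₀ m ξ‖ - S.d' * S.lam ^ m * ‖ξ‖) / 2) (by linarith)
  linarith

/-- Linearization error along two trajectories. -/
noncomputable def errg (k₀ : ℕ) (a b : E) (j : ℕ) : E :=
  S.f (k₀+j) (flow S.f k₀ j a) - S.f (k₀+j) (flow S.f k₀ j b)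
    - S.A (k₀+j) (flow S.f k₀ j a - flow S.f k₀ j b)

/-- Variation-of-constants identity for the difference of two trajectories. -/
lemma err_identity (k₀ : ℕ) (a b : E) (m : ℕ) :
    flow S.f k₀ m a - flow S.f k₀ m b
      = tmat S.A k₀ m (a - b)
        + ∑ j ∈ Finset.range m, tmat S.A (k₀+j+1) (m-1-j) (S.errg k₀ a b j) := by
  induction m with
  | zero => simp [flow, tmat]
  | succ m ih =>
    have hstep : flow S.f k₀ (m+1) a - flow S.f k₀ (m+1) b
        = S.A (k₀+m) (flow S.f k₀ m a - flow S.f k₀ m b) + S.errg k₀ a b m := by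
      show S.f (k₀+m) (flow S.f k₀ m a) - S.f (k₀+m) (flow S.f k₀ m b) = _
      rw [errg]; abel
    have hterm : ∀ j ∈ Finset.range m,
        tmat S.A (k₀+j+1) (m+1-1-j) (S.errg k₀ a b j)
          = S.A (k₀+m) (tmat S.A (k₀+j+1) (m-1-j) (S.errg k₀ a b j)) := by
      intro j hj
      have hj' : j < m := Finset.mem_range.1 hj
      have h1 : m+1-1-j = (m-1-j)+1 := by omega
      have h2 : (k₀+j+1) + (m-1-j) = k₀ + m := by omega
      rw [h1]
      show (S.A ((k₀+j+1) + (m-1-j))).comp (tmat S.A (k₀+j+1) (m-1-j)) (S.errg k₀ a b j) = _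
      rw [h2]
      rfl
    calc flow S.f k₀ (m+1) a - flow S.f k₀ (m+1) b
        = S.A (k₀+m) (flow S.f k₀ m a - flow S.f k₀ m b) + S.errg k₀ a b m := hstep
      _ = S.A (k₀+m) (tmat S.A k₀ m (a-b))
            + ∑ j ∈ Finset.range m, S.A (k₀+m) (tmat S.A (k₀+j+1) (m-1-j) (S.errg k₀ a b j))
            + S.errg k₀ a b m := by
          rw [ih, map_add, map_sum]
      _ = tmat S.A k₀ (m+1) (a-b)
            + ∑ j ∈ Finset.range (m+1), tmat S.A (k₀+j+1) (m+1-1-j) (S.errg k₀ a b j) := by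
          rw [Finset.sum_range_succ, Finset.sum_congr rfl hterm]
          have h0 : tmat S.A (k₀+m+1) (m+1-1-m) (S.errg k₀ a b m) = S.errg k₀ a b m := by
            have : m+1-1-m = 0 := by omega
            rw [this]; rfl
          rw [h0]
          show S.A (k₀+m) (tmat S.A k₀ m (a-b)) + _ + _ = (S.A (k₀+m)).comp (tmat S.A k₀ m) (a-b) + _
          rw [ContinuousLinearMap.comp_apply]
          abel

/-- One-block incremental bound near the origin. -/
lemma err_bound (k₀ m : ℕ) {a b : E} {r : ℝ} (hr0 : 0 ≤ r) (hrr : S.d' * r < S.r₀)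
    (haD : a ∈ S.D) (hbD : b ∈ S.D) (ha : ‖a‖ ≤ r) (hb : ‖b‖ ≤ r) :
    ‖flow S.f k₀ m a - flow S.f k₀ m b‖
      ≤ (S.d' * S.lam ^ m + S.LJ * S.d' ^ 2 * r * m * S.L ^ m) * ‖a - b‖ := by
  have hc : ∀ j, ‖S.errg k₀ a b j‖
      ≤ S.LJ * (S.d' * r) * ‖flow S.f k₀ j a - flow S.f k₀ j b‖ := by
    intro j
    have hxa : ‖flow S.f k₀ j a‖ ≤ S.d' * r := by
      refine (S.norm_flow_le' k₀ j haD).trans ?_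
      exact mul_le_mul_of_nonneg_left ha S.d'_pos.le
    have hxb : ‖flow S.f k₀ j b‖ ≤ S.d' * r := by
      refine (S.norm_flow_le' k₀ j hbD).trans ?_
      exact mul_le_mul_of_nonneg_left hb S.d'_pos.le
    exact S.taylor_step (k₀+j) hrr hxa hxb
  have hterm : ∀ j ∈ Finset.range m,
      ‖tmat S.A (k₀+j+1) (m-1-j) (S.errg k₀ a b j)‖
        ≤ S.d' * (S.LJ * (S.d' * r) * (S.L ^ m * ‖a - b‖)) := by
    intro j hj
    have hj' : j < m := Finset.mem_range.1 hj
    have h1 := S.norm_tmat_le (k₀+j+1) (m-1-j) (S.errg k₀ a b j)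
    have h2 : S.d' * S.lam ^ (m-1-j) * ‖S.errg k₀ a b j‖ ≤ S.d' * ‖S.errg k₀ a b j‖ := by
      have h := S.lam_pow_le_one (m-1-j)
      nlinarith [mul_nonneg (mul_nonneg S.d'_pos.le (norm_nonneg (S.errg k₀ a b j)))
        (sub_nonneg.2 h)]
    refine (h1.trans h2).trans ?_
    refine mul_le_mul_of_nonneg_left ?_ S.d'_pos.le
    refine (hc j).trans ?_
    refine mul_le_mul_of_nonneg_left ?_ (mul_nonneg S.hLJ.le (mul_nonneg S.d'_pos.le hr0))
    refine (S.flow_lipschitz k₀ j haD hbD).trans ?_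
    refine mul_le_mul_of_nonneg_right ?_ (norm_nonneg _)
    exact pow_le_pow_right₀ S.one_le_L hj'.le
  have hsum : ∑ j ∈ Finset.range m, ‖tmat S.A (k₀+j+1) (m-1-j) (S.errg k₀ a b j)‖
      ≤ m * (S.d' * (S.LJ * (S.d' * r) * (S.L ^ m * ‖a - b‖))) := by
    calc ∑ j ∈ Finset.range m, ‖tmat S.A (k₀+j+1) (m-1-j) (S.errg k₀ a b j)‖
        ≤ ∑ _j ∈ Finset.range m, S.d' * (S.LJ * (S.d' * r) * (S.L ^ m * ‖a - b‖)) :=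
          Finset.sum_le_sum hterm
      _ = m * (S.d' * (S.LJ * (S.d' * r) * (S.L ^ m * ‖a - b‖))) := by
          rw [Finset.sum_const, Finset.card_range, nsmul_eq_mul]
  calc ‖flow S.f k₀ m a - flow S.f k₀ m b‖
      = ‖tmat S.A k₀ m (a-b)
          + ∑ j ∈ Finset.range m, tmat S.A (k₀+j+1) (m-1-j) (S.errg k₀ a b j)‖ := by
        rw [S.err_identity k₀ a b m]
    _ ≤ ‖tmat S.A k₀ m (a-b)‖
          + ∑ j ∈ Finset.range m, ‖tmat S.A (k₀+j+1) (m-1-j) (S.errg k₀ a b j)‖ :=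
        (norm_add_le _ _).trans (by gcongr; exact norm_sum_le _ _)
    _ ≤ S.d' * S.lam ^ m * ‖a - b‖
          + m * (S.d' * (S.LJ * (S.d' * r) * (S.L ^ m * ‖a - b‖))) :=
        add_le_add (S.norm_tmat_le k₀ m (a-b)) hsum
    _ = (S.d' * S.lam ^ m + S.LJ * S.d' ^ 2 * r * m * S.L ^ m) * ‖a - b‖ := by ring

/-- Existence of a half-contraction horizon `N` and radius `r`. -/
lemma half_contraction : ∃ (N : ℕ) (r : ℝ), 1 ≤ N ∧ 0 < r ∧ S.d' * r < S.r₀ ∧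
    S.d' * S.lam ^ N ≤ 1/4 ∧
    ∀ (k₀ : ℕ) {a b : E}, a ∈ S.D → b ∈ S.D → ‖a‖ ≤ r → ‖b‖ ≤ r →
      ‖flow S.f k₀ N a - flow S.f k₀ N b‖ ≤ (1/2) * ‖a - b‖ := by
  obtain ⟨N₁, hN₁⟩ := exists_pow_lt_of_lt_one (show (0:ℝ) < 1/(4*S.d') by
    have := S.d'_pos; positivity) S.hlam1
  set N := max N₁ 1 with hN
  have hN1 : 1 ≤ N := le_max_right _ _
  have hlamN : S.d' * S.lam ^ N ≤ 1/4 := by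
    have h1 : S.lam ^ N ≤ S.lam ^ N₁ :=
      pow_le_pow_of_le_one S.hlam0.le S.hlam1.le (le_max_left _ _)
    have h2 : S.d' * S.lam ^ N₁ ≤ S.d' * (1/(4*S.d')) :=
      mul_le_mul_of_nonneg_left hN₁.le S.d'_pos.le
    have h3 : S.d' * (1/(4*S.d')) = 1/4 := by
      rw [mul_one_div, mul_comm 4 S.d', div_mul_eq_div_div, div_self (ne_of_gt S.d'_pos)]
    nlinarith [mul_le_mul_of_nonneg_left h1 S.d'_pos.le]
  set c1 : ℝ := S.LJ * S.d' ^ 2 * N * S.L ^ N + 1 with hc1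
  have hc1pos : 0 < c1 := by
    have h1 : (0:ℝ) ≤ S.LJ * S.d' ^ 2 * N * S.L ^ N := by
      have := S.hLJ; have := S.d'_pos; have := S.L_pos
      positivity
    linarith
  set r : ℝ := min (S.r₀ / (2 * S.d')) ((1/4) / c1) with hr
  have hrpos : 0 < r := by
    apply lt_min
    · exact div_pos S.hr₀ (by have := S.d'_pos; positivity)
    · positivity
  have hrr : S.d' * r < S.r₀ := by
    have h1 : r ≤ S.r₀ / (2 * S.d') := min_le_left _ _
    have h2 : S.d' * r ≤ S.d' * (S.r₀ / (2 * S.d')) := mul_le_mul_of_nonneg_left h1 S.d'_pos.le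
    have h3 : S.d' * (S.r₀ / (2 * S.d')) = S.r₀ / 2 := by
      rw [mul_comm 2 S.d', ← mul_div_assoc, mul_div_mul_left S.r₀ 2 (ne_of_gt S.d'_pos)]
    rw [h3] at h2
    linarith [S.hr₀]
  refine ⟨N, r, hN1, hrpos, hrr, hlamN, ?_⟩
  intro k₀ a b haD hbD ha hb
  refine (S.err_bound k₀ N hrpos.le hrr haD hbD ha hb).trans ?_
  refine mul_le_mul_of_nonneg_right ?_ (norm_nonneg _)
  have hsmall : S.LJ * S.d' ^ 2 * r * N * S.L ^ N ≤ 1/4 := by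
    have h1 : r ≤ (1/4) / c1 := min_le_right _ _
    have h2 : S.LJ * S.d' ^ 2 * N * S.L ^ N ≤ c1 := by
      simp only [hc1]; linarith
    have h3 : 0 ≤ S.LJ * S.d' ^ 2 * N * S.L ^ N := by
      have := S.hLJ; have := S.d'_pos; have := S.L_pos
      positivity
    calc S.LJ * S.d' ^ 2 * r * N * S.L ^ N = (S.LJ * S.d' ^ 2 * N * S.L ^ N) * r := by ring
      _ ≤ c1 * ((1/4) / c1) := by
          refine mul_le_mul h2 h1 hrpos.le hc1pos.le
      _ = 1/4 := by
          field_simp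
  linarith

/-- Local incremental exponential stability near the origin. -/
lemma local_contraction : ∃ (c μ r : ℝ), 1 ≤ c ∧ 0 < μ ∧ μ < 1 ∧ 0 < r ∧ S.d' * r < S.r₀ ∧
    ∀ (k₀ j : ℕ) {a b : E}, a ∈ S.D → b ∈ S.D → ‖a‖ ≤ r → ‖b‖ ≤ r →
      ‖flow S.f k₀ j a - flow S.f k₀ j b‖ ≤ c * μ ^ j * ‖a - b‖ := by
  obtain ⟨N, r, hN1, hrpos, hrr, hlamN, hhalf⟩ := S.half_contraction
  have hNpos : 0 < (N:ℝ) := by exact_mod_cast hN1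
  -- states stay in the small ball at multiples of N
  have hnorm : ∀ (k₀ m : ℕ) {a : E}, a ∈ S.D → ‖a‖ ≤ r → ‖flow S.f k₀ (m*N) a‖ ≤ r := by
    intro k₀ m a haD ha
    rcases Nat.eq_zero_or_pos m with rfl | hm
    · simpa [flow] using ha
    · have h1 := S.norm_flow_le k₀ (m*N) haD
      have h2 : S.lam ^ (m*N) ≤ S.lam ^ N :=
        pow_le_pow_of_le_one S.hlam0.le S.hlam1.le (Nat.le_mul_of_pos_left N hm)
      have h3 : S.d' * S.lam ^ (m*N) ≤ 1/4 := by
        nlinarith [mul_le_mul_of_nonneg_left h2 S.d'_pos.le]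
      have h4 : S.d' * S.lam ^ (m*N) * ‖a‖ ≤ (1/4) * r := by
        refine mul_le_mul h3 ha (norm_nonneg _) (by norm_num)
      nlinarith
  have hmul : ∀ (k₀ m : ℕ) {a b : E}, a ∈ S.D → b ∈ S.D → ‖a‖ ≤ r → ‖b‖ ≤ r →
      ‖flow S.f k₀ (m*N) a - flow S.f k₀ (m*N) b‖ ≤ (1/2)^m * ‖a - b‖ := by
    intro k₀ m
    induction m with
    | zero => intro a b _ _ _ _; simp [flow]
    | succ m ih =>
      intro a b haD hbD ha hb
      have heq : ∀ ξ : E, flow S.f k₀ ((m+1)*N) ξ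
          = flow S.f (k₀ + m*N) N (flow S.f k₀ (m*N) ξ) := by
        intro ξ
        have : (m+1)*N = m*N + N := by ring
        rw [this, flow_add]
      rw [heq a, heq b]
      have h5 := hhalf (k₀ + m*N) (S.flow_mem k₀ (m*N) haD) (S.flow_mem k₀ (m*N) hbD)
        (hnorm k₀ m haD ha) (hnorm k₀ m hbD hb)
      refine h5.trans ?_
      have h6 := ih haD hbD ha hb
      calc (1/2) * ‖flow S.f k₀ (m*N) a - flow S.f k₀ (m*N) b‖
          ≤ (1/2) * ((1/2)^m * ‖a - b‖) := by linarith
        _ = (1/2)^(m+1) * ‖a - b‖ := by ring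
  set μ : ℝ := (1/2 : ℝ) ^ ((N:ℝ)⁻¹) with hμ
  have hμpos : 0 < μ := Real.rpow_pos_of_pos (by norm_num) _
  have hμlt1 : μ < 1 := Real.rpow_lt_one (by norm_num) (by norm_num) (by positivity)
  have hμpow : ∀ j : ℕ, μ ^ j = (1/2 : ℝ) ^ ((j:ℝ) * (N:ℝ)⁻¹) := by
    intro j
    rw [hμ, ← Real.rpow_natCast ((1/2 : ℝ) ^ ((N:ℝ)⁻¹)) j, ← Real.rpow_mul (by norm_num)]
    ring_nf
  have hhalfpow : ∀ j : ℕ, ((1/2 : ℝ)) ^ (j / N) ≤ 2 * μ ^ j := by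
    intro j
    have hNnat : 0 < N := hN1
    have hjlt : j < N * (j / N + 1) := by
      calc j < j / N * N + N := Nat.lt_div_mul_add hNnat
        _ = N * (j / N + 1) := by ring
    have hjle : (j:ℝ) ≤ (N:ℝ) * ((j/N : ℕ) + 1) := by
      exact_mod_cast hjlt.le
    have hq : (j:ℝ) * (N:ℝ)⁻¹ ≤ ((j / N : ℕ) : ℝ) + 1 := by
      rw [mul_comm, inv_mul_le_iff₀ hNpos]
      exact hjle
    have hle : (1/2 : ℝ) ^ (((j/N : ℕ) : ℝ) + 1) ≤ (1/2 : ℝ) ^ ((j:ℝ) * (N:ℝ)⁻¹) :=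
      Real.rpow_le_rpow_of_exponent_ge (by norm_num) (by norm_num) hq
    calc (1/2 : ℝ) ^ (j / N)
        = 2 * (1/2 : ℝ) ^ (j / N + 1) := by rw [pow_succ]; ring
      _ = 2 * (1/2 : ℝ) ^ (((j/N : ℕ) : ℝ) + 1) := by
          rw [← Real.rpow_natCast (1/2 : ℝ) (j/N + 1)]
          push_cast
          ring_nf
      _ ≤ 2 * (1/2 : ℝ) ^ ((j:ℝ) * (N:ℝ)⁻¹) := by
          exact mul_le_mul_of_nonneg_left hle (by norm_num)
      _ = 2 * μ ^ j := by rw [hμpow j]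
  refine ⟨2 * S.L ^ N, μ, r, ?_, hμpos, hμlt1, hrpos, hrr, ?_⟩
  · have h1 : (1:ℝ) ≤ S.L ^ N := one_le_pow₀ S.one_le_L
    linarith
  intro k₀ j a b haD hbD ha hb
  have hdecomp : (j/N)*N + j%N = j := by
    rw [mul_comm]
    exact Nat.div_add_mod j N
  have heq : ∀ ξ : E, flow S.f k₀ j ξ
      = flow S.f (k₀ + (j/N)*N) (j%N) (flow S.f k₀ ((j/N)*N) ξ) := by
    intro ξ
    conv_lhs => rw [← hdecomp]
    rw [flow_add]
  have hmemA : flow S.f k₀ ((j/N)*N) a ∈ S.D := S.flow_mem _ _ haD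
  have hmemB : flow S.f k₀ ((j/N)*N) b ∈ S.D := S.flow_mem _ _ hbD
  have hlip := S.flow_lipschitz (k₀ + (j/N)*N) (j%N) hmemA hmemB
  have hrec := hmul k₀ (j/N) haD hbD ha hb
  have hLle : S.L ^ (j%N) ≤ S.L ^ N :=
    pow_le_pow_right₀ S.one_le_L (Nat.mod_lt j hN1).le
  calc ‖flow S.f k₀ j a - flow S.f k₀ j b‖
      = ‖flow S.f (k₀ + (j/N)*N) (j%N) (flow S.f k₀ ((j/N)*N) a)
          - flow S.f (k₀ + (j/N)*N) (j%N) (flow S.f k₀ ((j/N)*N) b)‖ := by rw [heq a, heq b]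
    _ ≤ S.L ^ (j%N) * ‖flow S.f k₀ ((j/N)*N) a - flow S.f k₀ ((j/N)*N) b‖ := hlip
    _ ≤ S.L ^ N * ((1/2)^(j/N) * ‖a - b‖) :=
        mul_le_mul hLle hrec (norm_nonneg _) (pow_nonneg S.L_pos.le N)
    _ ≤ S.L ^ N * (2 * μ ^ j * ‖a - b‖) :=
        mul_le_mul_of_nonneg_left
          (mul_le_mul_of_nonneg_right (hhalfpow j) (norm_nonneg (a - b)))
          (pow_nonneg S.L_pos.le N)
    _ = (2 * S.L ^ N) * μ ^ j * ‖a - b‖ := by ring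

/-- Global incremental exponential stability on `D`. -/
lemma global_contraction : ∃ C ρ : ℝ, 0 < C ∧ 0 < ρ ∧ ρ < 1 ∧
    ∀ (k₀ m : ℕ) {a b : E}, a ∈ S.D → b ∈ S.D →
      ‖flow S.f k₀ m a - flow S.f k₀ m b‖ ≤ C * ρ ^ m * ‖a - b‖ := by
  obtain ⟨c, μ, r, hc1, hμ0, hμ1, hr0, hrr, hloc⟩ := S.local_contraction
  obtain ⟨N₀, hN₀⟩ := exists_pow_lt_of_lt_one
    (show (0:ℝ) < r / (S.d' * S.R) from div_pos hr0 (mul_pos S.d'_pos S.hR0)) S.hlam1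
  have hsmall : ∀ (k₀ : ℕ) {a : E}, a ∈ S.D → ‖flow S.f k₀ N₀ a‖ ≤ r := by
    intro k₀ a haD
    have h1 := S.norm_flow_le k₀ N₀ haD
    have h2 := S.hR a haD
    have h3 : S.lam ^ N₀ ≤ r / (S.d' * S.R) := hN₀.le
    have h4 : S.d' * (r / (S.d' * S.R)) * S.R = r := by
      field_simp [ne_of_gt S.d'_pos, ne_of_gt S.hR0]
    calc ‖flow S.f k₀ N₀ a‖ ≤ S.d' * S.lam ^ N₀ * ‖a‖ := h1
      _ ≤ S.d' * S.lam ^ N₀ * S.R := by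
          refine mul_le_mul_of_nonneg_left h2 ?_
          exact mul_nonneg S.d'_pos.le (pow_nonneg S.hlam0.le N₀)
      _ ≤ S.d' * (r / (S.d' * S.R)) * S.R := by
          refine mul_le_mul_of_nonneg_right
            (mul_le_mul_of_nonneg_left h3 S.d'_pos.le) S.hR0.le
      _ = r := h4
  have hμN₀ : (0:ℝ) < μ ^ N₀ := pow_pos hμ0 N₀
  set C : ℝ := c * S.L ^ N₀ / μ ^ N₀ with hC
  have hCpos : 0 < C := by
    apply div_pos (mul_pos (lt_of_lt_of_le one_pos hc1) (pow_pos S.L_pos N₀)) hμN₀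
  refine ⟨C, μ, hCpos, hμ0, hμ1, ?_⟩
  intro k₀ m a b haD hbD
  rcases le_or_gt N₀ m with hm | hm
  · -- m ≥ N₀ : contract after the transient
    have hdec : ∀ ξ : E, flow S.f k₀ m ξ
        = flow S.f (k₀ + N₀) (m - N₀) (flow S.f k₀ N₀ ξ) := by
      intro ξ
      conv_lhs => rw [← Nat.add_sub_cancel' hm]
      rw [flow_add]
    have h5 := hloc (k₀ + N₀) (m - N₀) (S.flow_mem k₀ N₀ haD) (S.flow_mem k₀ N₀ hbD)
      (hsmall k₀ haD) (hsmall k₀ hbD)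
    have h6 := S.flow_lipschitz k₀ N₀ haD hbD
    have hμm : μ ^ m = μ ^ (m - N₀) * μ ^ N₀ := (pow_sub_mul_pow μ hm).symm
    have hCeq : C * μ ^ m = c * μ ^ (m - N₀) * S.L ^ N₀ := by
      rw [hC, hμm]
      field_simp
    calc ‖flow S.f k₀ m a - flow S.f k₀ m b‖
        = ‖flow S.f (k₀+N₀) (m-N₀) (flow S.f k₀ N₀ a)
            - flow S.f (k₀+N₀) (m-N₀) (flow S.f k₀ N₀ b)‖ := by rw [hdec a, hdec b]
      _ ≤ c * μ ^ (m - N₀) * ‖flow S.f k₀ N₀ a - flow S.f k₀ N₀ b‖ := h5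
      _ ≤ c * μ ^ (m - N₀) * (S.L ^ N₀ * ‖a - b‖) := by
          refine mul_le_mul_of_nonneg_left h6 ?_
          exact mul_nonneg (le_trans one_pos.le hc1) (pow_nonneg hμ0.le _)
      _ = C * μ ^ m * ‖a - b‖ := by rw [hCeq]; ring
  · -- m < N₀ : crude Lipschitz bound
    have h6 := S.flow_lipschitz k₀ m haD hbD
    have key : S.L ^ m ≤ C * μ ^ m := by
      rw [hC, div_mul_eq_mul_div, le_div_iff₀ hμN₀]
      have e1 : S.L ^ m ≤ S.L ^ N₀ := pow_le_pow_right₀ S.one_le_L hm.le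
      have e2 : μ ^ N₀ ≤ μ ^ m := pow_le_pow_of_le_one hμ0.le hμ1.le hm.le
      have p1 : (0:ℝ) ≤ μ ^ N₀ := hμN₀.le
      have p2 : (0:ℝ) ≤ S.L ^ N₀ := (pow_pos S.L_pos N₀).le
      have p3 : (0:ℝ) ≤ μ ^ m := (pow_pos hμ0 m).le
      nlinarith [mul_nonneg (sub_nonneg.2 e1) p1, mul_nonneg p2 (sub_nonneg.2 e2),
        mul_nonneg (sub_nonneg.2 hc1) (mul_nonneg p2 p3)]
    refine h6.trans ?_
    exact mul_le_mul_of_nonneg_right key (norm_nonneg _)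

end Setup

end EDISS

open EDISS in
/-- Exponential stability implies E-δISS (Corollary 2). -/
theorem es_implies_ediss
    (n : ℕ) (D : Set (EuclideanSpace ℝ (Fin n)))
    (f : ℕ → EuclideanSpace ℝ (Fin n) → EuclideanSpace ℝ (Fin n))
    (Lf d lam r₀ Abar LJ : ℝ)
    (J : ℕ → EuclideanSpace ℝ (Fin n) →
      (EuclideanSpace ℝ (Fin n) →L[ℝ] EuclideanSpace ℝ (Fin n)))
    (hD : IsCompact D) (h0D : (0 : EuclideanSpace ℝ (Fin n)) ∈ D)
    (hinv : ∀ k, ∀ x ∈ D, f k x ∈ D)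
    (hf0 : ∀ k, f k 0 = 0)
    (hLf : 0 < Lf)
    (hLip : ∀ k, ∀ p ∈ D, ∀ q ∈ D, ‖f k p - f k q‖ ≤ Lf * ‖p - q‖)
    (hr₀ : 0 < r₀)
    (hball : Metric.ball (0 : EuclideanSpace ℝ (Fin n)) r₀ ⊆ D)
    (hJ : ∀ k, ∀ x ∈ Metric.ball (0 : EuclideanSpace ℝ (Fin n)) r₀,
      HasFDerivAt (f k) (J k x) x)
    (hAbar : 0 < Abar) (hLJ : 0 < LJ)
    (hJbound : ∀ k, ∀ x ∈ Metric.ball (0 : EuclideanSpace ℝ (Fin n)) r₀,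
      ‖J k x‖ ≤ Abar)
    (hJLip : ∀ k, ∀ x ∈ Metric.ball (0 : EuclideanSpace ℝ (Fin n)) r₀,
      ∀ y ∈ Metric.ball (0 : EuclideanSpace ℝ (Fin n)) r₀,
      ‖J k x - J k y‖ ≤ LJ * ‖x - y‖)
    (hd : 0 < d) (hlam : 0 < lam ∧ lam < 1)
    (hES : ∀ (k₀ : ℕ) (x : ℕ → EuclideanSpace ℝ (Fin n)), x k₀ ∈ D →
      (∀ k, k₀ ≤ k → x (k + 1) = f k (x k)) →
      ∀ k, k₀ ≤ k → ‖x k‖ ≤ d * ‖x k₀‖ * lam ^ (k - k₀)) :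
    ∃ c₀ cw ρ : ℝ, 0 < c₀ ∧ 0 < cw ∧ 0 < ρ ∧ ρ < 1 ∧
      ∀ (k₀ : ℕ) (x y w : ℕ → EuclideanSpace ℝ (Fin n)),
        (∀ k, k₀ ≤ k → x (k + 1) = f k (x k)) →
        (∀ k, k₀ ≤ k → y (k + 1) = f k (y k) + w k) →
        (∀ k, k₀ ≤ k → x k ∈ D) →
        (∀ k, k₀ ≤ k → y k ∈ D) →
        ∀ k, k₀ ≤ k →
          ‖x k - y k‖ ≤ c₀ * ρ ^ (k - k₀) * ‖x k₀ - y k₀‖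
            + cw * ∑ i ∈ Finset.Ico k₀ k, ρ ^ (k - 1 - i) * ‖w i‖ := by
  classical
  -- a bound on the compact set `D`
  obtain ⟨R₁, hR₁⟩ := hD.isBounded.subset_closedBall 0
  set R : ℝ := max R₁ 1 with hRdef
  have hR0 : (0:ℝ) < R := lt_of_lt_of_le one_pos (le_max_right _ _)
  have hR : ∀ x ∈ D, ‖x‖ ≤ R := by
    intro x hx
    have := hR₁ hx
    simp only [Metric.mem_closedBall, dist_zero_right] at this
    exact this.trans (le_max_left _ _)
  -- exponential stability in terms of the flow
  have hESflow : ∀ k₀ ξ, ξ ∈ D → ∀ m, ‖flow f k₀ m ξ‖ ≤ d * ‖ξ‖ * lam ^ m := by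
    intro k₀ ξ hξ m
    set x : ℕ → EuclideanSpace ℝ (Fin n) := fun k => flow f k₀ (k - k₀) ξ with hx
    have hx0 : x k₀ = ξ := by simp [hx, flow]
    have hxrec : ∀ k, k₀ ≤ k → x (k + 1) = f k (x k) := by
      intro k hk
      have h1 : k + 1 - k₀ = (k - k₀) + 1 := by omega
      have h2 : k₀ + (k - k₀) = k := by omega
      simp only [hx, h1]
      show f (k₀ + (k - k₀)) (flow f k₀ (k - k₀) ξ) = f k (flow f k₀ (k - k₀) ξ)
      rw [h2]
    have := hES k₀ x (by rwa [hx0]) hxrec (k₀ + m) (Nat.le_add_right _ _)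
    simpa [hx, hx0, Nat.add_sub_cancel_left, flow] using this
  -- package the hypotheses
  set S : EDISS.Setup (EuclideanSpace ℝ (Fin n)) :=
    { D := D, f := f, J := J, Lf := Lf, d := d, lam := lam, r₀ := r₀,
      Abar := Abar, LJ := LJ, R := R,
      h0D := h0D, hinv := hinv, hf0 := hf0, hLf := hLf, hLip := hLip,
      hr₀ := hr₀, hball := hball, hJ := hJ, hAbar := hAbar, hJbound := hJbound,
      hLJ := hLJ, hJLip := hJLip, hd := hd, hlam0 := hlam.1, hlam1 := hlam.2,
      hR := hR, hR0 := hR0, hES := hESflow } with hSdef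
  obtain ⟨C, ρ, hC, hρ0, hρ1, hG⟩ := S.global_contraction
  have hG' : ∀ (k₀ m : ℕ) {a b : EuclideanSpace ℝ (Fin n)}, a ∈ D → b ∈ D →
      ‖flow f k₀ m a - flow f k₀ m b‖ ≤ C * ρ ^ m * ‖a - b‖ := hG
  refine ⟨C, C, ρ, hC, hC, hρ0, hρ1, ?_⟩
  intro k₀ x y w hx hy hxD hyD k hk
  -- `x` agrees with the flow
  have hflowx : ∀ j, k₀ ≤ j → x j = flow f k₀ (j - k₀) (x k₀) := by
    intro j hj
    induction j, hj using Nat.le_induction with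
    | base => simp [flow]
    | succ j hj ih =>
      have h1 : j + 1 - k₀ = (j - k₀) + 1 := by omega
      have h2 : k₀ + (j - k₀) = j := by omega
      rw [hx j hj, ih, h1]
      show _ = f (k₀ + (j - k₀)) (flow f k₀ (j - k₀) (x k₀))
      rw [h2]
  -- the interpolating trajectories
  set ψ : ℕ → EuclideanSpace ℝ (Fin n) := fun i => flow f i (k - i) (y i) with hψ
  have hψk : ψ k = y k := by simp [hψ, flow]
  have hψstep : ∀ i, k₀ ≤ i → i < k → ‖ψ (i+1) - ψ i‖ ≤ C * ρ ^ (k - 1 - i) * ‖w i‖ := by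
    intro i hi hik
    have hp : k - i = 1 + (k - (i+1)) := by omega
    have hψi : ψ i = flow f (i+1) (k - (i+1)) (f i (y i)) := by
      simp only [hψ]
      rw [hp, flow_add]
      rfl
    have hψi1 : ψ (i+1) = flow f (i+1) (k - (i+1)) (f i (y i) + w i) := by
      simp only [hψ]
      rw [hy i hi]
    have hmem1 : f i (y i) + w i ∈ D := by
      rw [← hy i hi]
      exact hyD (i+1) (by omega)
    have hmem2 : f i (y i) ∈ D := hinv i _ (hyD i hi)
    have := hG' (i+1) (k - (i+1)) hmem1 hmem2
    rw [hψi, hψi1]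
    have heq : (f i (y i) + w i) - f i (y i) = w i := by abel
    rw [heq] at this
    have hexp : k - (i+1) = k - 1 - i := by omega
    rw [← hexp]
    exact this
  have hψ0 : ‖x k - ψ k₀‖ ≤ C * ρ ^ (k - k₀) * ‖x k₀ - y k₀‖ := by
    rw [hflowx k hk]
    exact hG' k₀ (k - k₀) (hxD k₀ le_rfl) (hyD k₀ le_rfl)
  -- telescoping
  have htel : ψ k - ψ k₀ = ∑ i ∈ Finset.Ico k₀ k, (ψ (i+1) - ψ i) :=
    (telescope ψ hk).symm
  have hdiff : x k - y k = (x k - ψ k₀) - (ψ k - ψ k₀) := by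
    rw [hψk]
    abel
  have hsumbound : ‖ψ k - ψ k₀‖ ≤ ∑ i ∈ Finset.Ico k₀ k, C * ρ ^ (k - 1 - i) * ‖w i‖ := by
    rw [htel]
    refine (norm_sum_le _ _).trans ?_
    refine Finset.sum_le_sum ?_
    intro i hi
    rw [Finset.mem_Ico] at hi
    exact hψstep i hi.1 hi.2
  have hfinal : ∑ i ∈ Finset.Ico k₀ k, C * ρ ^ (k - 1 - i) * ‖w i‖
      = C * ∑ i ∈ Finset.Ico k₀ k, ρ ^ (k - 1 - i) * ‖w i‖ := by
    rw [Finset.mul_sum]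
    exact Finset.sum_congr rfl (fun i _ => by ring)
  calc ‖x k - y k‖ = ‖(x k - ψ k₀) - (ψ k - ψ k₀)‖ := by rw [hdiff]
    _ ≤ ‖x k - ψ k₀‖ + ‖ψ k - ψ k₀‖ := norm_sub_le _ _
    _ ≤ C * ρ ^ (k - k₀) * ‖x k₀ - y k₀‖
          + ∑ i ∈ Finset.Ico k₀ k, C * ρ ^ (k - 1 - i) * ‖w i‖ :=
        add_le_add hψ0 hsumbound
    _ = C * ρ ^ (k - k₀) * ‖x k₀ - y k₀‖
          + C * ∑ i ∈ Finset.Ico k₀ k, ρ ^ (k - 1 - i) * ‖w i‖ := by rw [hfinal]
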